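/- If 0 < q1 < q2 < 1, 0 < A < B, and α ∈ (0,1), then λ̃ = (1-α)·(B - A)/((1-q2)·B + q1·A) is strictly positive, and the updated values (1 + λ̃·q1)·A and (1 - λ̃·(1-q2))·B satisfy (1 + λ̃·q1)·A < (1 - λ̃·(1-q2))·B. -/

import Mathlib

/-- MDUMIQE: the chosen step size λ̃ is strictly positive and the multiplicative
update preserves the strict monotone ordering of the two quantile estimates. -/
theorem mdumiqe_step_positive_and_monotone
    (q1 q2 A B α lam : ℝ)
    (hq1 : 0 < q1) (hq12 : q1 < q2) (hq2 : q2 < 1)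
    (hA : 0 < A) (hAB : A < B)
    (hα : 0 < α) (hα1 : α < 1)
    (hlam : lam = (1 - α) * (B - A) / ((1 - q2) * B + q1 * A)) :
    0 < lam ∧ (1 + lam * q1) * A < (1 - lam * (1 - q2)) * B := by
  have hD : 0 < (1 - q2) * B + q1 * A := by nlinarith
  have hpos : 0 < lam := by
    rw [hlam]
    exact div_pos (by nlinarith) hD
  refine ⟨hpos, ?_⟩
  have key : lam * ((1 - q2) * B + q1 * A) = (1 - α) * (B - A) := by
    rw [hlam, div_mul_cancel₀]; exact hD.ne'
  nlinarith
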